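/- In any implication semigroup, the identity x·y·x = y·x·ω holds for all x, y ∈ S. -/
import Mathlib


theorem stmt_8 {S : Type*} [Semigroup S] (ω : S)
    (h1 : ∀ x y z : S, x * y * z = z * ω * x * y * z * ω * ω)
    (h2 : ω * ω * ω = ω) :
    ∀ x y : S, x * y * x = y * x * ω := by
  intro x y
  calc x * y * x
      = x*(ω*(x*(y*(x*(ω*ω))))) := by
        simpa only [mul_assoc] using h1 x y x
    _ = x*(ω*(x*(y*(x*(ω*(ω*(ω*ω))))))) := by
        simpa only [mul_assoc] using congrArg (fun t => x*ω*x*y*x*ω*t) h2.symm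
    _ = x*(ω*(x*(y*(x*(ω*(ω*(ω*(ω*(ω*(ω*(ω*(ω*ω)))))))))))) := by
        simpa only [mul_assoc] using congrArg (fun t => x*ω*x*y*x*t) (h1 ω ω (ω*ω))
    _ = x*(ω*(x*(y*(x*(ω*(ω*(ω*(ω*ω)))))))) := by
        simpa only [mul_assoc] using congrArg (fun t => x*ω*x*y*x*ω*ω*t) (h1 ω ω ω).symm
    _ = x*(y*(x*(ω*(ω*ω)))) := by
        simpa only [mul_assoc] using congrArg (fun t => t*(ω*ω*ω)) (h1 x y x).symm
    _ = x*(ω*(ω*(ω*(y*(x*(ω*(ω*(ω*(ω*ω))))))))) := by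
        simpa only [mul_assoc] using congrArg (fun t => x*t) (h1 y (x*ω) (ω*ω))
    _ = ω*(ω*(y*(x*(ω*(ω*ω))))) := by
        simpa only [mul_assoc] using congrArg (fun t => t*(ω*ω*ω)) (h1 (ω*ω) y x).symm
    _ = y*(x*ω) := by
        simpa only [mul_assoc] using (h1 y x ω).symm
    _ = y*x*ω := (mul_assoc y x ω).symm
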